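/- Let x₁, …, x_a and y₁, …, y_b be strictly positive real numbers with ∑ x_i = ∑ y_j. If there is no connection graph with the x_i as weights on one side and the y_j as weights on the other, then all the numbers x₁,…,x_a,y₁,…,y_b are pairwise commensurable (each ratio x_i/x_j, x_i/y_j, y_i/y_j is rational). -/

import Mathlib

/-- One step of the leaf-removal operation on a weighted graph state.  A state is a pair
`(s, w)` of the set of remaining vertices and the current weight function.  A step removes a
leaf `v` of the graph induced on `s` (a vertex with a unique neighbour `u` in `s`) and
subtracts the weight of `v` from that of `u`. -/
def LeafStep {V : Type} [DecidableEq V] (G : SimpleGraph V) :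
    Finset V × (V → ℝ) → Finset V × (V → ℝ) → Prop := fun st st' =>
  ∃ v ∈ st.1, ∃ u ∈ st.1, u ≠ v ∧ G.Adj v u ∧ (∀ x ∈ st.1, G.Adj v x → x = u) ∧
    st'.1 = st.1.erase v ∧ st'.2 = Function.update st.2 u (st.2 u - st.2 v)

/-- `ReachN G n st st'` : the state `st'` is obtained from `st` by exactly `n` leaf-removal
steps. -/
def ReachN {V : Type} [DecidableEq V] (G : SimpleGraph V) :
    ℕ → Finset V × (V → ℝ) → Finset V × (V → ℝ) → Prop
  | 0, st, st' => st' = st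
  | n + 1, st, st' => ∃ m, LeafStep G st m ∧ ReachN G n m st'

/-- A connection graph with weights `x : Fin a → ℝ` on the positive side and
`y : Fin b → ℝ` on the negative side: a bipartite tree on `Fin a ⊕ Fin b` with strictly
positive weights whose two sides have equal total weight, and such that applying between `1`
and (#edges − 1) = `a + b - 2` leaf-removal steps always leaves all remaining weights
strictly positive. -/
def IsConnectionGraph {a b : ℕ} (G : SimpleGraph (Fin a ⊕ Fin b))
    (x : Fin a → ℝ) (y : Fin b → ℝ) : Prop :=
  G.IsTree ∧
  (∀ i j, ¬ G.Adj (Sum.inl i) (Sum.inl j)) ∧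
  (∀ i j, ¬ G.Adj (Sum.inr i) (Sum.inr j)) ∧
  (∀ i, 0 < x i) ∧ (∀ j, 0 < y j) ∧
  (∑ i, x i = ∑ j, y j) ∧
  (∀ n : ℕ, 1 ≤ n → n ≤ a + b - 2 →
    ∀ st, ReachN G n (Finset.univ, Sum.elim x y) st → ∀ v ∈ st.1, 0 < st.2 v)

/-! ### Partial sums of an extended-by-zero sequence -/

namespace CGAux

open Finset

/-- partial sums of `g : ℕ → ℝ`. -/
def ps (g : ℕ → ℝ) (k : ℕ) : ℝ := ∑ i ∈ Finset.range k, g i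

variable {g : ℕ → ℝ} {n : ℕ}

lemma ps_zero : ps g 0 = 0 := by simp [ps]

lemma ps_succ (k : ℕ) : ps g (k + 1) = ps g k + g k := by
  simp [ps, Finset.sum_range_succ]

lemma ps_mono (hg : ∀ m, 0 ≤ g m) : Monotone (ps g) := by
  intro k l hkl
  simpa [ps] using Finset.sum_le_sum_of_subset_of_nonneg
    (Finset.range_subset_range.2 hkl) (fun i _ _ => hg i)

lemma ps_lt (hg : ∀ m, 0 ≤ g m) (hk : 0 < g k) {l : ℕ} (hkl : k < l) :
    ps g k < ps g l := by
  have h1 : ps g k < ps g (k + 1) := by rw [ps_succ]; linarith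
  exact h1.trans_le (ps_mono hg hkl)

lemma ps_stable (hg : ∀ m, n ≤ m → g m = 0) {k : ℕ} (hk : n ≤ k) :
    ps g k = ps g n := by
  induction k with
  | zero => rw [Nat.le_zero.mp hk]
  | succ k ih =>
    rcases Nat.lt_or_ge n (k+1) with h | h
    · rw [ps_succ, hg k (by omega), ih (by omega), add_zero]
    · have : n = k + 1 := le_antisymm hk h
      rw [this]

lemma ps_le_top (hg0 : ∀ m, 0 ≤ g m) (hg : ∀ m, n ≤ m → g m = 0) (k : ℕ) :
    ps g k ≤ ps g n := by
  rcases Nat.lt_or_ge k n with h | h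
  · exact ps_mono hg0 h.le
  · rw [ps_stable hg h]

/-- find the interval containing `t`. -/
lemma ps_find (hg0 : ∀ m, 0 ≤ g m) (t : ℝ) (h0 : 0 ≤ t) :
    ∀ n, t < ps g n → ∃ l, l < n ∧ ps g l ≤ t ∧ t < ps g (l + 1) := by
  intro n
  induction n with
  | zero => intro h; rw [ps_zero] at h; linarith
  | succ n ih =>
    intro h
    rcases le_or_gt (ps g n) t with h1 | h1
    · exact ⟨n, Nat.lt_succ_self n, h1, h⟩
    · obtain ⟨l, hl, h2, h3⟩ := ih h1
      exact ⟨l, by omega, h2, h3⟩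

/-- the prefix-sum cross inequality for a slope-sorted sequence (non-strict). -/
lemma prefix_ge (w p : ℕ → ℝ) (n : ℕ) (hw : ∀ m, m < n → 0 < w m)
    (hw0 : ∀ m, n ≤ m → w m = 0) (hp0 : ∀ m, n ≤ m → p m = 0)
    (hcross : ∀ i j, i ≤ j → j < n → p j * w i ≤ p i * w j)
    (k : ℕ) (hk : k ≤ n) :
    ps p n * ps w k ≤ ps p k * ps w n := by
  rcases eq_or_lt_of_le hk with h | hkn
  · rw [h]
  have hwk : 0 < w k := hw k hkn
  have claim1 : p k * ps w k ≤ ps p k * w k := by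
    have := Finset.sum_le_sum (f := fun i => p k * w i) (g := fun i => p i * w k)
      (s := Finset.range k) (fun i hi => by
        exact hcross i k (le_of_lt (Finset.mem_range.mp hi)) hkn)
    simpa [ps, Finset.mul_sum, Finset.sum_mul] using this
  have claim2 : (ps p n - ps p k) * w k ≤ p k * (ps w n - ps w k) := by
    have hsum : ∀ f : ℕ → ℝ, ∑ i ∈ Finset.Ico k n, f i = ps f n - ps f k := by
      intro f
      rw [ps, ps, eq_sub_iff_add_eq, ← Finset.sum_range_add_sum_Ico f hkn.le]
      ring
    have := Finset.sum_le_sum (f := fun i => p i * w k) (g := fun i => p k * w i)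
      (s := Finset.Ico k n) (fun i hi => by
        obtain ⟨h1, h2⟩ := Finset.mem_Ico.mp hi
        exact hcross k i h1 h2)
    rw [← Finset.sum_mul, ← Finset.mul_sum, hsum, hsum] at this
    exact this
  have hC : 0 ≤ ps w k := Finset.sum_nonneg fun i hi => (hw i (lt_of_lt_of_le (Finset.mem_range.mp hi) hk)).le
  have hD : 0 ≤ ps w n - ps w k := by
    have : ps w k < ps w n := ps_lt (g := w) (fun m => by
      rcases Nat.lt_or_ge m n with h | h
      · exact (hw m h).le
      · rw [hw0 m h]) hwk hkn
    linarith
  nlinarith [mul_le_mul_of_nonneg_right claim2 hC, mul_le_mul_of_nonneg_right claim1 hD]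

/-- strict version -/
lemma prefix_gt (w p : ℕ → ℝ) (n : ℕ) (hw : ∀ m, m < n → 0 < w m)
    (hw0 : ∀ m, n ≤ m → w m = 0) (hp0 : ∀ m, n ≤ m → p m = 0)
    (hcross : ∀ i j, i ≤ j → j < n → p j * w i ≤ p i * w j)
    (hne : ∃ i j, i < n ∧ j < n ∧ p i * w j ≠ p j * w i)
    (k : ℕ) (h0k : 0 < k) (hk : k < n) :
    ps p n * ps w k < ps p k * ps w n := by
  have hwk : 0 < w k := hw k hk
  have hwnn : ∀ m, 0 ≤ w m := fun m => by
    rcases Nat.lt_or_ge m n with h | h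
    · exact (hw m h).le
    · rw [hw0 m h]
  have hC : 0 < ps w k := ps_lt hwnn (hw 0 (by omega)) h0k
  have hD : 0 < ps w n - ps w k := by
    have := ps_lt hwnn hwk hk; linarith
  have hsum : ∀ f : ℕ → ℝ, ∑ i ∈ Finset.Ico k n, f i = ps f n - ps f k := by
    intro f
    rw [ps, ps, eq_sub_iff_add_eq, ← Finset.sum_range_add_sum_Ico f hk.le]
    ring
  by_cases hall : ∀ i, i < k → p i * w k = p k * w i
  · -- prefix is flat; find strict slope drop in the suffix
    have claim1 : p k * ps w k = ps p k * w k := by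
      have : ∑ i ∈ Finset.range k, p k * w i = ∑ i ∈ Finset.range k, p i * w k :=
        Finset.sum_congr rfl fun i hi => (hall i (Finset.mem_range.mp hi)).symm
      simpa [ps, Finset.mul_sum, Finset.sum_mul] using this
    obtain ⟨i, j, hi, hj, hij⟩ := hne
    have hm : ∃ m, m < n ∧ p m * w k ≠ p k * w m := by
      by_contra hcon
      push_neg at hcon
      apply hij
      have e1 := hcon i hi
      have e2 := hcon j hj
      have : p i * w j * w k = p j * w i * w k := by
        linear_combination w j * e1 - w i * e2
      exact mul_right_cancel₀ (ne_of_gt hwk) this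
    obtain ⟨m, hmn, hm⟩ := hm
    have hkm : k ≤ m := by
      by_contra h
      exact hm (hall m (by omega))
    have claim2 : (ps p n - ps p k) * w k < p k * (ps w n - ps w k) := by
      have := Finset.sum_lt_sum (f := fun i => p i * w k) (g := fun i => p k * w i)
        (s := Finset.Ico k n)
        (fun i hi => by
          obtain ⟨h1, h2⟩ := Finset.mem_Ico.mp hi
          exact hcross k i h1 h2)
        ⟨m, Finset.mem_Ico.mpr ⟨hkm, hmn⟩, lt_of_le_of_ne (hcross k m hkm hmn) hm⟩
      rw [← Finset.sum_mul, ← Finset.mul_sum, hsum, hsum] at this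
      exact this
    nlinarith [mul_lt_mul_of_pos_right claim2 hC]
  · push_neg at hall
    obtain ⟨i, hik, hi⟩ := hall
    have claim1 : p k * ps w k < ps p k * w k := by
      have := Finset.sum_lt_sum (f := fun i => p k * w i) (g := fun i => p i * w k)
        (s := Finset.range k)
        (fun i hi => hcross i k (le_of_lt (Finset.mem_range.mp hi)) hk)
        ⟨i, Finset.mem_range.mpr hik, lt_of_le_of_ne (hcross i k hik.le hk) (Ne.symm hi)⟩
      simpa [ps, Finset.mul_sum, Finset.sum_mul] using this
    have claim2 : (ps p n - ps p k) * w k ≤ p k * (ps w n - ps w k) := by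
      have := Finset.sum_le_sum (f := fun i => p i * w k) (g := fun i => p k * w i)
        (s := Finset.Ico k n) (fun i hi => by
          obtain ⟨h1, h2⟩ := Finset.mem_Ico.mp hi
          exact hcross k i h1 h2)
      rw [← Finset.sum_mul, ← Finset.mul_sum, hsum, hsum] at this
      exact this
    nlinarith [mul_le_mul_of_nonneg_left claim2 hC.le, mul_lt_mul_of_pos_right claim1 hD]


end CGAux


namespace CGAux

/-- From an irrational ratio, produce a `ℚ`-linear functional separating the two reals. -/
lemma exists_phi (r s : ℝ) (hs : s ≠ 0) (h : ¬ ∃ q : ℚ, r = (q : ℝ) * s) :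
    ∃ φ : ℝ →ₗ[ℚ] ℚ, φ r = 1 ∧ φ s = 0 := by
  have hrs : r ≠ s := by
    intro he; exact h ⟨1, by rw [he]; ring⟩
  have hli : LinearIndependent ℚ ![r, s] := by
    rw [LinearIndependent.pair_iff]
    intro p q hpq
    rcases eq_or_ne p 0 with hp | hp
    · subst hp
      constructor
      · rfl
      · simp only [zero_smul, zero_add] at hpq
        by_contra hq
        exact hs (by
          have : (q : ℝ) * s = 0 := by
            simpa [Rat.smul_def] using hpq
          rcases mul_eq_zero.mp this with h' | h'
          · exact absurd (by exact_mod_cast h' : q = 0) hq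
          · exact h')
    · exfalso
      apply h
      refine ⟨-q / p, ?_⟩
      have hpq' : (p : ℝ) * r + (q : ℝ) * s = 0 := by
        simpa [Rat.smul_def] using hpq
      have hp' : (p : ℝ) ≠ 0 := by exact_mod_cast hp
      push_cast
      field_simp
      linarith
  have hrange : Set.range ![r, s] = ({r, s} : Set ℝ) := by
    ext t
    simp only [Set.mem_range, Fin.exists_fin_two, Set.mem_insert_iff, Set.mem_singleton_iff]
    constructor
    · rintro (h | h) <;> simp [h.symm] <;> tauto
    · rintro (h | h)
      · exact Or.inl (by simp [h])
      · exact Or.inr (by simp [h])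
  have hli' : LinearIndepOn ℚ id ({r, s} : Set ℝ) := by
    have := (linearIndepOn_id_range_iff hli.injective).mpr hli
    rwa [hrange] at this
  set B := Module.Basis.extend hli' with hB
  have hsub : ({r, s} : Set ℝ) ⊆ hli'.extend (Set.subset_univ _) :=
    Module.Basis.subset_extend hli'
  have hrmem : r ∈ hli'.extend (Set.subset_univ _) := hsub (by simp)
  have hsmem : s ∈ hli'.extend (Set.subset_univ _) := hsub (by simp)
  refine ⟨B.coord ⟨r, hrmem⟩, ?_, ?_⟩
  · rw [Module.Basis.coord_apply]
    have : B.repr r ⟨r, hrmem⟩ = B.repr (B ⟨r, hrmem⟩) ⟨r, hrmem⟩ := by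
      congr 2
      exact (Module.Basis.extend_apply_self hli' ⟨r, hrmem⟩).symm
    rw [this, Module.Basis.repr_self_apply, if_pos rfl]
  · rw [Module.Basis.coord_apply]
    have : B.repr s ⟨r, hrmem⟩ = B.repr (B ⟨s, hsmem⟩) ⟨r, hrmem⟩ := by
      congr 2
      exact (Module.Basis.extend_apply_self hli' ⟨s, hsmem⟩).symm
    rw [this, Module.Basis.repr_self_apply, if_neg]
    intro he
    have h2 : s = r := congrArg Subtype.val he
    exact hrs h2.symm

end CGAux

namespace CGAux

section Construction

variable {a b : ℕ} (x : Fin a → ℝ) (y : Fin b → ℝ)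
  (σ : Equiv.Perm (Fin a)) (τ : Equiv.Perm (Fin b))

/-- `x` rearranged by `σ` and extended by zero to `ℕ`. -/
def xe : ℕ → ℝ := fun m => if h : m < a then x (σ ⟨m, h⟩) else 0

/-- cut points of the `x`-side. -/
def Xc : ℕ → ℝ := ps (xe x σ)

def lov : Fin a ⊕ Fin b → ℝ :=
  Sum.elim (fun i => Xc x σ (σ.symm i)) (fun j => Xc y τ (τ.symm j))

def hiv : Fin a ⊕ Fin b → ℝ :=
  Sum.elim (fun i => Xc x σ ((σ.symm i : ℕ) + 1)) (fun j => Xc y τ ((τ.symm j : ℕ) + 1))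

/-- The interval-overlap bipartite graph. -/
def CG : SimpleGraph (Fin a ⊕ Fin b) where
  Adj v u := v.isLeft ≠ u.isLeft ∧ lov x y σ τ v < hiv x y σ τ u ∧ lov x y σ τ u < hiv x y σ τ v
  symm := by
    constructor
    rintro v u ⟨h1, h2, h3⟩
    exact ⟨Ne.symm h1, h3, h2⟩
  loopless := by
    constructor
    rintro v ⟨h1, -⟩
    exact h1 rfl

variable (hx : ∀ i, 0 < x i)
include hx

lemma xe_nonneg : ∀ m, 0 ≤ xe x σ m := by
  intro m; unfold xe; split
  · exact (hx _).le
  · exact le_rfl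

lemma xe_pos {m : ℕ} (hm : m < a) : 0 < xe x σ m := by
  unfold xe; rw [dif_pos hm]; exact hx _

lemma xe_zero {m : ℕ} (hm : a ≤ m) : xe x σ m = 0 := by
  unfold xe; rw [dif_neg (by omega)]

lemma Xc_zero : Xc x σ 0 = 0 := ps_zero

lemma Xc_top : Xc x σ a = ∑ i, x i := by
  unfold Xc ps
  rw [← Fin.sum_univ_eq_sum_range (fun m => xe x σ m) a]
  rw [show (fun i : Fin a => xe x σ i) = fun i : Fin a => x (σ i) from funext fun i => by
    unfold xe; rw [dif_pos i.isLt]]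
  exact Equiv.sum_comp σ x

lemma Xc_mono : Monotone (Xc x σ) := ps_mono (xe_nonneg x σ hx)

lemma Xc_strict {k l : ℕ} (hk : k < l) (hl : k < a) : Xc x σ k < Xc x σ l :=
  ps_lt (xe_nonneg x σ hx) (xe_pos x σ hx hl) hk

lemma Xc_le_top (k : ℕ) : Xc x σ k ≤ Xc x σ a :=
  ps_le_top (xe_nonneg x σ hx) (fun m hm => xe_zero x σ hx hm) k

lemma Xc_nonneg (k : ℕ) : 0 ≤ Xc x σ k := by
  have := Xc_mono x σ hx (Nat.zero_le k); rwa [Xc_zero x σ hx] at this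

/-- `Xc` determines the index below `a`. -/
lemma Xc_inj {k l : ℕ} (hk : k ≤ a) (hl : l ≤ a) (h : Xc x σ k = Xc x σ l) : k = l := by
  rcases lt_trichotomy k l with hkl | hkl | hkl
  · exact absurd h (ne_of_lt (Xc_strict x σ hx hkl (by omega)))
  · exact hkl
  · exact absurd h.symm (ne_of_lt (Xc_strict x σ hx hkl (by omega)))

variable (hy : ∀ j, 0 < y j)
include hy

omit hx in
lemma Yc_top (hsum : ∑ i, x i = ∑ j, y j) : Xc y τ b = ∑ i, x i := by
  rw [Xc_top y τ hy, hsum]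

omit hy in
lemma lo_lt_hi_l (i : Fin a) : lov x y σ τ (Sum.inl i) < hiv x y σ τ (Sum.inl i) :=
  Xc_strict x σ hx (Nat.lt_succ_self _) (σ.symm i).isLt

omit hx in
lemma lo_lt_hi_r (j : Fin b) : lov x y σ τ (Sum.inr j) < hiv x y σ τ (Sum.inr j) :=
  Xc_strict y τ hy (Nat.lt_succ_self _) (τ.symm j).isLt

lemma lo_lt_hi (v : Fin a ⊕ Fin b) : lov x y σ τ v < hiv x y σ τ v := by
  cases v with
  | inl i => exact lo_lt_hi_l x y σ τ hx i
  | inr j => exact lo_lt_hi_r x y σ τ hy j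

lemma lo_nonneg (v : Fin a ⊕ Fin b) : 0 ≤ lov x y σ τ v := by
  cases v with
  | inl i => exact Xc_nonneg x σ hx _
  | inr j => exact Xc_nonneg y τ hy _

lemma hi_le_S (hsum : ∑ i, x i = ∑ j, y j) (v : Fin a ⊕ Fin b) :
    hiv x y σ τ v ≤ ∑ i, x i := by
  cases v with
  | inl i => rw [← Xc_top x σ hx]; exact Xc_le_top x σ hx _
  | inr j => rw [← Yc_top x y τ hy hsum]; exact Xc_le_top y τ hy _

lemma hi_pos (v : Fin a ⊕ Fin b) : 0 < hiv x y σ τ v :=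
  lt_of_le_of_lt (lo_nonneg x y σ τ hx hy v) (lo_lt_hi x y σ τ hx hy v)

/-- no cut point lies strictly inside the overlap of the intervals of two adjacent
vertices. -/
lemma no_cut {v u : Fin a ⊕ Fin b} (hadj : (CG x y σ τ).Adj v u) {z : ℝ}
    (hz : (∃ m, z = Xc x σ m) ∨ (∃ m, z = Xc y τ m))
    (h1 : max (lov x y σ τ v) (lov x y σ τ u) < z)
    (h2 : z < min (hiv x y σ τ v) (hiv x y σ τ u)) : False := by
  obtain ⟨hside, -, -⟩ := hadj
  have key : ∀ (i : Fin a) (j : Fin b),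
      max (Xc x σ (σ.symm i)) (Xc y τ (τ.symm j)) < z →
      z < min (Xc x σ ((σ.symm i : ℕ) + 1)) (Xc y τ ((τ.symm j : ℕ) + 1)) → False := by
    intro i j ha1 ha2
    rw [max_lt_iff] at ha1
    rw [lt_min_iff] at ha2
    rcases hz with ⟨m, rfl⟩ | ⟨m, rfl⟩
    · have hm : (σ.symm i : ℕ) + 1 ≤ m := by
        by_contra hcon
        have : Xc x σ m ≤ Xc x σ (σ.symm i) := Xc_mono x σ hx (by omega)
        linarith [ha1.1]
      have : Xc x σ ((σ.symm i : ℕ) + 1) ≤ Xc x σ m := Xc_mono x σ hx hm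
      linarith [ha2.1]
    · have hm : (τ.symm j : ℕ) + 1 ≤ m := by
        by_contra hcon
        have : Xc y τ m ≤ Xc y τ (τ.symm j) := Xc_mono y τ hy (by omega)
        linarith [ha1.2]
      have : Xc y τ ((τ.symm j : ℕ) + 1) ≤ Xc y τ m := Xc_mono y τ hy hm
      linarith [ha2.2]
  cases v with
  | inl i =>
    cases u with
    | inl i' => simp at hside
    | inr j => exact key i j h1 h2
  | inr j =>
    cases u with
    | inl i => exact key i j (by rwa [max_comm] at h1) (by rwa [min_comm] at h2)
    | inr j' => simp at hside

/-- intervals of two distinct vertices on the same side have disjoint interiors. -/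
lemma same_side_disjoint {v u : Fin a ⊕ Fin b} (hne : v ≠ u)
    (hside : v.isLeft = u.isLeft) :
    hiv x y σ τ v ≤ lov x y σ τ u ∨ hiv x y σ τ u ≤ lov x y σ τ v := by
  cases v with
  | inl i =>
    cases u with
    | inl i' =>
      have hkk : ((σ.symm i : Fin a) : ℕ) ≠ ((σ.symm i' : Fin a) : ℕ) := by
        intro h
        apply hne
        have h2 : σ.symm i = σ.symm i' := Fin.ext h
        have h3 := congrArg σ h2
        simp only [Equiv.apply_symm_apply] at h3
        rw [h3]
      rcases lt_or_gt_of_ne hkk with h | h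
      · exact Or.inl (Xc_mono x σ hx (by omega))
      · exact Or.inr (Xc_mono x σ hx (by omega))
    | inr j => simp at hside
  | inr j =>
    cases u with
    | inl i => simp at hside
    | inr j' =>
      have hkk : ((τ.symm j : Fin b) : ℕ) ≠ ((τ.symm j' : Fin b) : ℕ) := by
        intro h
        apply hne
        have h2 : τ.symm j = τ.symm j' := Fin.ext h
        have h3 := congrArg τ h2
        simp only [Equiv.apply_symm_apply] at h3
        rw [h3]
      rcases lt_or_gt_of_ne hkk with h | h
      · exact Or.inl (Xc_mono y τ hy (by omega))
      · exact Or.inr (Xc_mono y τ hy (by omega))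


omit hx hy in
lemma lov_is_cut (w : Fin a ⊕ Fin b) :
    (∃ m, lov x y σ τ w = Xc x σ m) ∨ (∃ m, lov x y σ τ w = Xc y τ m) := by
  cases w with
  | inl i => exact Or.inl ⟨σ.symm i, rfl⟩
  | inr j => exact Or.inr ⟨τ.symm j, rfl⟩

omit hx hy in
lemma hiv_is_cut (w : Fin a ⊕ Fin b) :
    (∃ m, hiv x y σ τ w = Xc x σ m) ∨ (∃ m, hiv x y σ τ w = Xc y τ m) := by
  cases w with
  | inl i => exact Or.inl ⟨(σ.symm i : ℕ) + 1, rfl⟩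
  | inr j => exact Or.inr ⟨(τ.symm j : ℕ) + 1, rfl⟩

lemma edge_isBridge {v u : Fin a ⊕ Fin b} (hadj0 : (CG x y σ τ).Adj v u) :
    ¬((CG x y σ τ) \ SimpleGraph.fromEdgeSet {s(v, u)}).Reachable v u := by
  set G := CG x y σ τ with hG
  obtain ⟨hside, hvu, huv⟩ := hadj0
  have hadj : G.Adj v u := ⟨hside, hvu, huv⟩
  set c := max (lov x y σ τ v) (lov x y σ τ u) with hc
  set M := min (hiv x y σ τ v) (hiv x y σ τ u) with hM
  have hcM : c < M := max_lt (lt_min (lo_lt_hi x y σ τ hx hy v) hvu)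
    (lt_min huv (lo_lt_hi x y σ τ hx hy u))
  have hMv : M ≤ hiv x y σ τ v := min_le_left _ _
  have hMu : M ≤ hiv x y σ τ u := min_le_right _ _
  have hcv : lov x y σ τ v ≤ c := le_max_left _ _
  have hcu : lov x y σ τ u ≤ c := le_max_right _ _
  have hvne : v ≠ u := G.ne_of_adj hadj
  have hcontain : ∀ w, lov x y σ τ w ≤ c → M ≤ hiv x y σ τ w → w = v ∨ w = u := by
    intro w h1 h2
    by_cases hwv : w = v
    · exact Or.inl hwv
    by_cases hwu : w = u
    · exact Or.inr hwu
    exfalso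
    by_cases hs : w.isLeft = v.isLeft
    · rcases same_side_disjoint x y σ τ hx hy hwv hs with h | h
      · linarith
      · linarith
    · have hs' : w.isLeft = u.isLeft := by
        cases hb1 : w.isLeft <;> cases hb2 : v.isLeft <;> cases hb3 : u.isLeft <;> simp_all
      rcases same_side_disjoint x y σ τ hx hy hwu hs' with h | h
      · linarith
      · linarith
  set P : Fin a ⊕ Fin b → Prop := fun w => w = v ∨
    (hiv x y σ τ w ≤ c ∧ lov x y σ τ v < c) ∨
    (M ≤ lov x y σ τ w ∧ M < hiv x y σ τ v) with hP
  have hPv : P v := Or.inl rfl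
  have hPu : ¬ P u := by
    rintro (rfl | ⟨h1, h2⟩ | ⟨h1, h2⟩)
    · exact hvne rfl
    · linarith
    · linarith
  have hstep : ∀ w w', P w → (G \ SimpleGraph.fromEdgeSet {s(v, u)}).Adj w w' → P w' := by
    intro w w' hw hadj'
    rw [SimpleGraph.sdiff_adj] at hadj'
    obtain ⟨hGw, hnotE⟩ := hadj'
    have hww' : w ≠ w' := G.ne_of_adj hGw
    have hedge : ¬(s(w, w') = s(v, u)) := by
      intro h
      exact hnotE ((SimpleGraph.fromEdgeSet_adj _).mpr ⟨by rw [h]; rfl, hww'⟩)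
    rw [Sym2.eq_iff] at hedge
    push_neg at hedge
    by_contra hPw'
    have hw'v : w' ≠ v := fun h => hPw' (Or.inl h)
    obtain ⟨hsw, h2, h3⟩ := hGw
    have hAdjG : G.Adj v u := hadj
    rcases hw with rfl | ⟨h4, h5⟩ | ⟨h4, h5⟩
    · -- w = v
      have hw'u : w' ≠ u := hedge.1 rfl
      by_cases hc1 : hiv x y σ τ w' ≤ c
      · exact hPw' (Or.inr (Or.inl ⟨hc1, lt_of_lt_of_le h2 hc1⟩))
      by_cases hc2 : M ≤ lov x y σ τ w'
      · exact hPw' (Or.inr (Or.inr ⟨hc2, lt_of_le_of_lt hc2 h3⟩))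
      push_neg at hc1 hc2
      have hlow : lov x y σ τ w' ≤ c := by
        by_contra h
        push_neg at h
        exact no_cut x y σ τ hx hy hadj (lov_is_cut x y σ τ w') h hc2
      have hhiw : M ≤ hiv x y σ τ w' := by
        by_contra h
        push_neg at h
        exact no_cut x y σ τ hx hy hadj (hiv_is_cut x y σ τ w') hc1 h
      rcases hcontain w' hlow hhiw with h | h
      · exact hw'v h
      · exact hw'u h
    · -- hiv w ≤ c, lov v < c
      by_cases hc1 : hiv x y σ τ w' ≤ c
      · exact hPw' (Or.inr (Or.inl ⟨hc1, h5⟩))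
      by_cases hc2 : M ≤ lov x y σ τ w'
      · linarith
      push_neg at hc1 hc2
      have hlow : lov x y σ τ w' ≤ c := by
        by_contra h
        push_neg at h
        exact no_cut x y σ τ hx hy hadj (lov_is_cut x y σ τ w') h hc2
      have hhiw : M ≤ hiv x y σ τ w' := by
        by_contra h
        push_neg at h
        exact no_cut x y σ τ hx hy hadj (hiv_is_cut x y σ τ w') hc1 h
      rcases hcontain w' hlow hhiw with h | h
      · exact hw'v h
      · -- w' = u : but then lov u < hiv w ≤ c and c = lov u
        have hclou : c = lov x y σ τ u := by
          rcases max_choice (lov x y σ τ v) (lov x y σ τ u) with h' | h'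
          · rw [← hc] at h'; linarith
          · rw [← hc] at h'; exact h'
        rw [h] at h3
        linarith
    · -- M ≤ lov w, M < hiv v
      by_cases hc2 : M ≤ lov x y σ τ w'
      · exact hPw' (Or.inr (Or.inr ⟨hc2, h5⟩))
      push_neg at hc2
      have hc1 : c < hiv x y σ τ w' := by linarith
      have hlow : lov x y σ τ w' ≤ c := by
        by_contra h
        push_neg at h
        exact no_cut x y σ τ hx hy hadj (lov_is_cut x y σ τ w') h hc2
      have hhiw : M ≤ hiv x y σ τ w' := by
        by_contra h
        push_neg at h
        exact no_cut x y σ τ hx hy hadj (hiv_is_cut x y σ τ w') hc1 h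
      rcases hcontain w' hlow hhiw with h | h
      · exact hw'v h
      · -- w' = u : then M = hiv u and lov w < hiv w' = hiv u = M ≤ lov w
        have hMhiu : M = hiv x y σ τ u := by
          rcases min_choice (hiv x y σ τ v) (hiv x y σ τ u) with h' | h'
          · rw [← hM] at h'; linarith
          · rw [← hM] at h'; exact h'
        rw [h] at h2
        linarith
  intro hreach
  rw [SimpleGraph.reachable_iff_reflTransGen] at hreach
  have aux : ∀ z, Relation.ReflTransGen (G \ SimpleGraph.fromEdgeSet {s(v, u)}).Adj v z → P z := by
    intro z hz
    induction hz with
    | refl => exact hPv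
    | tail hrt hstep' ih => exact hstep _ _ ih hstep'
  exact hPu (aux u hreach)


lemma connected_CG (ha : 0 < a) (hb : 0 < b) (hsum : ∑ i, x i = ∑ j, y j)
    (hco : ∀ k l, k < a → l < b → Xc x σ k = Xc y τ l → k = 0 ∧ l = 0) :
    (CG x y σ τ).Connected := by
  classical
  set G := CG x y σ τ with hG
  set v₀ : Fin a ⊕ Fin b := Sum.inl (σ ⟨0, ha⟩) with hv₀
  have hlov₀ : lov x y σ τ v₀ = 0 := by
    show Xc x σ (σ.symm (σ ⟨0, ha⟩)) = 0
    rw [Equiv.symm_apply_apply]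
    exact Xc_zero x σ hx
  have key : ∀ n : ℕ, ∀ v : Fin a ⊕ Fin b,
      (Finset.univ.filter (fun w => lov x y σ τ w < lov x y σ τ v)).card = n →
      G.Reachable v v₀ := by
    intro n
    induction n using Nat.strong_induction_on with
    | _ n IH =>
      intro v hn
      -- helper: from a strictly smaller `lov`, recurse
      have hrec : ∀ u : Fin a ⊕ Fin b, lov x y σ τ u < lov x y σ τ v →
          G.Adj v u → G.Reachable v v₀ := by
        intro u hlt hadj
        have hsubset : (Finset.univ.filter (fun w => lov x y σ τ w < lov x y σ τ u)) ⊆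
            (Finset.univ.filter (fun w => lov x y σ τ w < lov x y σ τ v)) := by
          intro w hw
          simp only [Finset.mem_filter, Finset.mem_univ, true_and] at hw ⊢
          linarith
        have hsub : (Finset.univ.filter (fun w => lov x y σ τ w < lov x y σ τ u)) ⊂
            (Finset.univ.filter (fun w => lov x y σ τ w < lov x y σ τ v)) := by
          rw [Finset.ssubset_def]
          refine ⟨hsubset, fun hcon => ?_⟩
          have := hcon (by simp only [Finset.mem_filter, Finset.mem_univ, true_and]; exact hlt :
            u ∈ Finset.univ.filter (fun w => lov x y σ τ w < lov x y σ τ v))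
          simp only [Finset.mem_filter, Finset.mem_univ, true_and] at this
          exact lt_irrefl _ this
        have hcard := Finset.card_lt_card hsub
        rw [hn] at hcard
        exact hadj.reachable.trans (IH _ hcard u rfl)
      cases v with
      | inl i =>
        by_cases hk0 : ((σ.symm i : Fin a) : ℕ) = 0
        · have : i = σ ⟨0, ha⟩ := by
            rw [← Equiv.apply_symm_apply σ i]
            congr 1
            exact Fin.ext hk0
          rw [this]
        · set k : ℕ := ((σ.symm i : Fin a) : ℕ) with hkdef
          have hka : k < a := (σ.symm i).isLt
          have h0 : 0 < Xc x σ k := by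
            have := Xc_strict x σ hx (show 0 < k by omega) ha
            rwa [Xc_zero x σ hx] at this
          have hlt : Xc x σ k < Xc y τ b := by
            rw [Yc_top x y τ hy hsum, ← Xc_top x σ hx]
            exact Xc_strict x σ hx hka hka
          obtain ⟨l, hlb, hl1, hl2⟩ := ps_find (xe_nonneg y τ hy) (Xc x σ k) h0.le b hlt
          have hYl : Xc y τ l < Xc x σ k := by
            rcases lt_or_eq_of_le hl1 with h | h
            · exact h
            · exfalso
              obtain ⟨hk', -⟩ := hco k l hka hlb h.symm
              omega
          set u : Fin a ⊕ Fin b := Sum.inr (τ ⟨l, hlb⟩) with hu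
          have hlou : lov x y σ τ u = Xc y τ l := by
            show Xc y τ (τ.symm (τ ⟨l, hlb⟩)) = Xc y τ l
            rw [Equiv.symm_apply_apply]
          have hhiu : hiv x y σ τ u = Xc y τ (l + 1) := by
            show Xc y τ ((τ.symm (τ ⟨l, hlb⟩) : ℕ) + 1) = Xc y τ (l + 1)
            rw [Equiv.symm_apply_apply]
          have hadj : G.Adj (Sum.inl i) u := by
            refine ⟨by simp [hu], ?_, ?_⟩
            · show lov x y σ τ (Sum.inl i) < hiv x y σ τ u
              rw [hhiu]
              exact hl2
            · show lov x y σ τ u < hiv x y σ τ (Sum.inl i)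
              rw [hlou]
              exact lt_trans hYl (Xc_strict x σ hx (Nat.lt_succ_self k) hka)
          exact hrec u (by rw [hlou]; exact hYl) hadj
      | inr j =>
        by_cases hl0 : ((τ.symm j : Fin b) : ℕ) = 0
        · -- adjacent to v₀ directly
          have hadj : G.Adj (Sum.inr j) v₀ := by
            refine ⟨by simp [hv₀], ?_, ?_⟩
            · show lov x y σ τ (Sum.inr j) < hiv x y σ τ v₀
              have : lov x y σ τ (Sum.inr j) = Xc y τ (τ.symm j) := rfl
              rw [this, hl0]
              rw [Xc_zero y τ hy]
              exact hi_pos x y σ τ hx hy v₀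
            · show lov x y σ τ v₀ < hiv x y σ τ (Sum.inr j)
              rw [hlov₀]
              exact hi_pos x y σ τ hx hy _
          exact hadj.reachable
        · set l : ℕ := ((τ.symm j : Fin b) : ℕ) with hldef
          have hlb : l < b := (τ.symm j).isLt
          have h0 : 0 < Xc y τ l := by
            have := Xc_strict y τ hy (show 0 < l by omega) hb
            rwa [Xc_zero y τ hy] at this
          have hlt : Xc y τ l < Xc x σ a := by
            rw [Xc_top x σ hx, ← Yc_top x y τ hy hsum]
            exact Xc_strict y τ hy hlb hlb
          obtain ⟨k, hka, hk1, hk2⟩ := ps_find (xe_nonneg x σ hx) (Xc y τ l) h0.le a hlt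
          have hXk : Xc x σ k < Xc y τ l := by
            rcases lt_or_eq_of_le hk1 with h | h
            · exact h
            · exfalso
              obtain ⟨-, hl'⟩ := hco k l hka hlb h
              omega
          set u : Fin a ⊕ Fin b := Sum.inl (σ ⟨k, hka⟩) with hu
          have hlou : lov x y σ τ u = Xc x σ k := by
            show Xc x σ (σ.symm (σ ⟨k, hka⟩)) = Xc x σ k
            rw [Equiv.symm_apply_apply]
          have hhiu : hiv x y σ τ u = Xc x σ (k + 1) := by
            show Xc x σ ((σ.symm (σ ⟨k, hka⟩) : ℕ) + 1) = Xc x σ (k + 1)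
            rw [Equiv.symm_apply_apply]
          have hadj : G.Adj (Sum.inr j) u := by
            refine ⟨by simp [hu], ?_, ?_⟩
            · show lov x y σ τ (Sum.inr j) < hiv x y σ τ u
              rw [hhiu]
              exact hk2
            · show lov x y σ τ u < hiv x y σ τ (Sum.inr j)
              rw [hlou]
              exact lt_trans hXk (Xc_strict y τ hy (Nat.lt_succ_self l) hlb)
          exact hrec u (by rw [hlou]; exact hXk) hadj
  rw [SimpleGraph.connected_iff]
  exact ⟨fun v w => (key _ v rfl).trans (key _ w rfl).symm, ⟨v₀⟩⟩


omit hx hy in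
lemma clamp_eq (lv hv lu hu : ℝ) (h1 : lv < hv) (h2 : lu < hu) :
    (if lv < hu ∧ lu < hv then min hv hu - max lv lu else 0)
      = max lv (min hv hu) - max lv (min hv lu) := by
  split_ifs with h
  · obtain ⟨ha1, ha2⟩ := h
    have e1 : max lv (min hv hu) = min hv hu := max_eq_right (le_min h1.le ha1.le)
    have e2 : min hv lu = lu := min_eq_right ha2.le
    rw [e1, e2]
  · push_neg at h
    by_cases hc : lv < hu
    · have h5 : hv ≤ lu := h hc
      have e1 : min hv hu = hv := min_eq_left (h5.trans h2.le)
      have e2 : min hv lu = hv := min_eq_left h5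
      rw [e1, e2, sub_self]
    · push_neg at hc
      have e1 : min hv hu = hu := min_eq_right (by linarith)
      have e2 : max lv hu = lv := max_eq_left hc
      have e3 : min hv lu = lu := min_eq_right (by linarith)
      have e4 : max lv lu = lv := max_eq_left (by linarith)
      rw [e1, e2, e3, e4, sub_self]

/-- overlap length of the intervals of two vertices (zero if not adjacent). -/
noncomputable def ov (v u : Fin a ⊕ Fin b) : ℝ :=
  if (lov x y σ τ v < hiv x y σ τ u ∧ lov x y σ τ u < hiv x y σ τ v) ∧ v.isLeft ≠ u.isLeft
  then min (hiv x y σ τ v) (hiv x y σ τ u) - max (lov x y σ τ v) (lov x y σ τ u) else 0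

omit hx hy in
lemma ov_comm (v u : Fin a ⊕ Fin b) : ov x y σ τ v u = ov x y σ τ u v := by
  unfold ov
  rw [min_comm, max_comm]
  congr 1
  · apply propext
    constructor
    · rintro ⟨⟨p, q⟩, r⟩; exact ⟨⟨q, p⟩, Ne.symm r⟩
    · rintro ⟨⟨p, q⟩, r⟩; exact ⟨⟨q, p⟩, Ne.symm r⟩

omit hx hy in
lemma ov_adj_iff {v u : Fin a ⊕ Fin b} :
    (CG x y σ τ).Adj v u ↔
      (lov x y σ τ v < hiv x y σ τ u ∧ lov x y σ τ u < hiv x y σ τ v) ∧ v.isLeft ≠ u.isLeft := by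
  constructor
  · rintro ⟨h1, h2, h3⟩; exact ⟨⟨h2, h3⟩, h1⟩
  · rintro ⟨⟨h2, h3⟩, h1⟩; exact ⟨h1, h2, h3⟩

omit hx hy in
lemma ov_of_not_adj {v u : Fin a ⊕ Fin b} (h : ¬ (CG x y σ τ).Adj v u) :
    ov x y σ τ v u = 0 := by
  unfold ov
  rw [if_neg]
  intro hcon
  exact h ((ov_adj_iff x y σ τ).mpr hcon)

lemma ov_nonneg (v u : Fin a ⊕ Fin b) : 0 ≤ ov x y σ τ v u := by
  unfold ov
  split_ifs with h
  · obtain ⟨⟨h1, h2⟩, h3⟩ := h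
    have := lo_lt_hi x y σ τ hx hy v
    have := lo_lt_hi x y σ τ hx hy u
    have : max (lov x y σ τ v) (lov x y σ τ u) < min (hiv x y σ τ v) (hiv x y σ τ u) :=
      max_lt (lt_min (by assumption) h1) (lt_min h2 (by assumption))
    linarith
  · exact le_rfl

lemma ov_pos {v u : Fin a ⊕ Fin b} (h : (CG x y σ τ).Adj v u) : 0 < ov x y σ τ v u := by
  obtain ⟨h1, h2, h3⟩ := h
  unfold ov
  rw [if_pos ⟨⟨h2, h3⟩, h1⟩]
  have := lo_lt_hi x y σ τ hx hy v
  have := lo_lt_hi x y σ τ hx hy u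
  have : max (lov x y σ τ v) (lov x y σ τ u) < min (hiv x y σ τ v) (hiv x y σ τ u) :=
    max_lt (lt_min (by assumption) h2) (lt_min h3 (by assumption))
  linarith

/-- the initial weights are exactly the total overlap with the other side. -/
lemma init_weight (hsum : ∑ i, x i = ∑ j, y j) (v : Fin a ⊕ Fin b) :
    Sum.elim x y v = ∑ u, ov x y σ τ v u := by
  have hSnn : (0:ℝ) ≤ ∑ i, x i := Finset.sum_nonneg fun i _ => (hx i).le
  rw [Fintype.sum_sum_type]
  cases v with
  | inl i =>
    have hzero : ∀ i' : Fin a, ov x y σ τ (Sum.inl i) (Sum.inl i') = 0 := by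
      intro i'
      unfold ov
      rw [if_neg]
      rintro ⟨-, h⟩
      exact h rfl
    rw [Finset.sum_congr rfl (fun i' _ => hzero i'), Finset.sum_const, smul_zero, zero_add]
    set lv := lov x y σ τ (Sum.inl i) with hlv
    set hv := hiv x y σ τ (Sum.inl i) with hhv
    have hterm : ∀ j : Fin b,
        ov x y σ τ (Sum.inl i) (Sum.inr j) =
          max lv (min hv (Xc y τ ((τ.symm j : ℕ) + 1))) - max lv (min hv (Xc y τ (τ.symm j))) := by
      intro j
      have h2 : Xc y τ (τ.symm j) < Xc y τ ((τ.symm j : ℕ) + 1) :=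
        Xc_strict y τ hy (Nat.lt_succ_self _) (τ.symm j).isLt
      have h1 : lv < hv := lo_lt_hi x y σ τ hx hy (Sum.inl i)
      have := clamp_eq lv hv (Xc y τ (τ.symm j)) (Xc y τ ((τ.symm j : ℕ) + 1)) h1 h2
      rw [← this]
      unfold ov
      apply if_congr _ rfl rfl
      constructor
      · rintro ⟨⟨p, q⟩, -⟩; exact ⟨p, q⟩
      · rintro ⟨p, q⟩; exact ⟨⟨p, q⟩, by simp⟩
    rw [Finset.sum_congr rfl (fun j _ => hterm j)]
    have hre := Equiv.sum_comp τ.symm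
      (fun l : Fin b => max lv (min hv (Xc y τ ((l : ℕ) + 1))) - max lv (min hv (Xc y τ l)))
    rw [hre, Fin.sum_univ_eq_sum_range
      (fun m => max lv (min hv (Xc y τ (m + 1))) - max lv (min hv (Xc y τ m))) b,
      Finset.sum_range_sub (fun m => max lv (min hv (Xc y τ m))) b]
    have hF0 : max lv (min hv (Xc y τ 0)) = lv := by
      rw [Xc_zero y τ hy, min_eq_right (hi_pos x y σ τ hx hy (Sum.inl i)).le,
        max_eq_left (lo_nonneg x y σ τ hx hy (Sum.inl i))]
    have hFb : max lv (min hv (Xc y τ b)) = hv := by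
      rw [Yc_top x y τ hy hsum,
        min_eq_left (hi_le_S x y σ τ hx hy hsum (Sum.inl i)),
        max_eq_right (lo_lt_hi x y σ τ hx hy (Sum.inl i)).le]
    rw [hF0, hFb]
    show x i = hiv x y σ τ (Sum.inl i) - lov x y σ τ (Sum.inl i)
    show x i = Xc x σ ((σ.symm i : ℕ) + 1) - Xc x σ (σ.symm i)
    rw [show Xc x σ ((σ.symm i : ℕ) + 1) = Xc x σ (σ.symm i) + xe x σ (σ.symm i) from ps_succ _]
    rw [show xe x σ ((σ.symm i : ℕ)) = x (σ (σ.symm i)) from by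
      unfold xe; rw [dif_pos (σ.symm i).isLt]]
    rw [Equiv.apply_symm_apply]
    ring
  | inr j =>
    have hzero : ∀ j' : Fin b, ov x y σ τ (Sum.inr j) (Sum.inr j') = 0 := by
      intro j'
      unfold ov
      rw [if_neg]
      rintro ⟨-, h⟩
      exact h rfl
    rw [Finset.sum_congr rfl (fun j' _ => hzero j'), Finset.sum_const, smul_zero, add_zero]
    set lv := lov x y σ τ (Sum.inr j) with hlv
    set hv := hiv x y σ τ (Sum.inr j) with hhv
    have hterm : ∀ i : Fin a,
        ov x y σ τ (Sum.inr j) (Sum.inl i) =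
          max lv (min hv (Xc x σ ((σ.symm i : ℕ) + 1))) - max lv (min hv (Xc x σ (σ.symm i))) := by
      intro i
      have h2 : Xc x σ (σ.symm i) < Xc x σ ((σ.symm i : ℕ) + 1) :=
        Xc_strict x σ hx (Nat.lt_succ_self _) (σ.symm i).isLt
      have h1 : lv < hv := lo_lt_hi x y σ τ hx hy (Sum.inr j)
      have := clamp_eq lv hv (Xc x σ (σ.symm i)) (Xc x σ ((σ.symm i : ℕ) + 1)) h1 h2
      rw [← this]
      unfold ov
      apply if_congr _ rfl rfl
      constructor
      · rintro ⟨⟨p, q⟩, -⟩; exact ⟨p, q⟩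
      · rintro ⟨p, q⟩; exact ⟨⟨p, q⟩, by simp⟩
    rw [Finset.sum_congr rfl (fun i _ => hterm i)]
    have hre := Equiv.sum_comp σ.symm
      (fun k : Fin a => max lv (min hv (Xc x σ ((k : ℕ) + 1))) - max lv (min hv (Xc x σ k)))
    rw [hre, Fin.sum_univ_eq_sum_range
      (fun m => max lv (min hv (Xc x σ (m + 1))) - max lv (min hv (Xc x σ m))) a,
      Finset.sum_range_sub (fun m => max lv (min hv (Xc x σ m))) a]
    have hF0 : max lv (min hv (Xc x σ 0)) = lv := by
      rw [Xc_zero x σ hx, min_eq_right (hi_pos x y σ τ hx hy (Sum.inr j)).le,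
        max_eq_left (lo_nonneg x y σ τ hx hy (Sum.inr j))]
    have hFb : max lv (min hv (Xc x σ a)) = hv := by
      rw [Xc_top x σ hx,
        min_eq_left (hi_le_S x y σ τ hx hy hsum (Sum.inr j)),
        max_eq_right (lo_lt_hi x y σ τ hx hy (Sum.inr j)).le]
    rw [hF0, hFb]
    show y j = hiv x y σ τ (Sum.inr j) - lov x y σ τ (Sum.inr j)
    show y j = Xc y τ ((τ.symm j : ℕ) + 1) - Xc y τ (τ.symm j)
    rw [show Xc y τ ((τ.symm j : ℕ) + 1) = Xc y τ (τ.symm j) + xe y τ (τ.symm j) from ps_succ _]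
    rw [show xe y τ ((τ.symm j : ℕ)) = y (τ (τ.symm j)) from by
      unfold xe; rw [dif_pos (τ.symm j).isLt]]
    rw [Equiv.apply_symm_apply]
    ring


end Construction

/-- removing a leaf keeps connectivity within the remaining set. -/
lemma shortcut {V : Type} [DecidableEq V] (G : SimpleGraph V) (s : Finset V) (ℓ u₀ : V)
    (hne : u₀ ≠ ℓ)
    (huniq : ∀ z ∈ s, G.Adj ℓ z → z = u₀) {v w : V} (hv : v ∈ s.erase ℓ)
    (h : Relation.ReflTransGen (fun p q => p ∈ s ∧ q ∈ s ∧ G.Adj p q) v w) :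
    (w ≠ ℓ → Relation.ReflTransGen
      (fun p q => p ∈ s.erase ℓ ∧ q ∈ s.erase ℓ ∧ G.Adj p q) v w) ∧
    (w = ℓ → Relation.ReflTransGen
      (fun p q => p ∈ s.erase ℓ ∧ q ∈ s.erase ℓ ∧ G.Adj p q) v u₀) := by
  induction h with
  | refl =>
    refine ⟨fun _ => Relation.ReflTransGen.refl, fun hh => ?_⟩
    exfalso
    exact (Finset.mem_erase.mp hv).1 (hh ▸ rfl)
  | @tail b w hrt hb ih =>
    obtain ⟨hbs, hws, hadj⟩ := hb
    constructor
    · intro hwℓ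
      by_cases hbℓ : b = ℓ
      · subst hbℓ
        have hwu : w = u₀ := huniq w hws hadj
        rw [hwu]
        exact ih.2 rfl
      · exact Relation.ReflTransGen.tail (ih.1 hbℓ)
          ⟨Finset.mem_erase.mpr ⟨hbℓ, hbs⟩, Finset.mem_erase.mpr ⟨hwℓ, hws⟩, hadj⟩
    · intro hwℓ
      subst hwℓ
      have hbu : b = u₀ := huniq b hbs hadj.symm
      rw [← hbu]
      apply ih.1
      intro hcon
      rw [hcon] at hbu
      exact hne hbu.symm

section Construction2

variable {a b : ℕ} (x : Fin a → ℝ) (y : Fin b → ℝ)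
  (σ : Equiv.Perm (Fin a)) (τ : Equiv.Perm (Fin b))
  (hx : ∀ i, 0 < x i) (hy : ∀ j, 0 < y j)

include hx hy

/-- The main construction: the interval graph is a connection graph. -/
theorem isConnectionGraph_CG (ha : 0 < a) (hb : 0 < b) (hsum : ∑ i, x i = ∑ j, y j)
    (hco : ∀ k l, k < a → l < b → Xc x σ k = Xc y τ l → k = 0 ∧ l = 0) :
    IsConnectionGraph (CG x y σ τ) x y := by
  classical
  set G := CG x y σ τ with hG
  have hconn : G.Connected := connected_CG x y σ τ hx hy ha hb hsum hco
  have htree : G.IsTree := by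
    refine ⟨hconn, ?_⟩
    rw [SimpleGraph.isAcyclic_iff_forall_adj_isBridge]
    intro v w hadj
    rw [SimpleGraph.isBridge_iff]
    exact edge_isBridge x y σ τ hx hy hadj
  -- the invariant
  set R : Finset (Fin a ⊕ Fin b) → (Fin a ⊕ Fin b) → (Fin a ⊕ Fin b) → Prop :=
    fun s p q => p ∈ s ∧ q ∈ s ∧ G.Adj p q with hR
  set Inv : ℕ → (Finset (Fin a ⊕ Fin b) × ((Fin a ⊕ Fin b) → ℝ)) → Prop := fun n st =>
    st.1.card + n = a + b ∧
    (∀ v ∈ st.1, ∀ u ∈ st.1, Relation.ReflTransGen (R st.1) v u) ∧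
    (∀ v ∈ st.1, st.2 v = ∑ u ∈ st.1, ov x y σ τ v u) with hInv
  have hstep : ∀ n st st', Inv n st → LeafStep G st st' → Inv (n + 1) st' := by
    intro n st st' hinv hls
    obtain ⟨hcard, hconn', hwt⟩ := hinv
    obtain ⟨ℓ, hℓ, u₀, hu₀, hneu, hadjℓ, huniq, hs', hw'⟩ := hls
    have hcard' : st'.1.card + (n + 1) = a + b := by
      rw [hs', Finset.card_erase_of_mem hℓ]
      have : 1 ≤ st.1.card := Finset.card_pos.mpr ⟨ℓ, hℓ⟩
      omega
    have hoveq : st.2 ℓ = ov x y σ τ ℓ u₀ := by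
      rw [hwt ℓ hℓ]
      apply Finset.sum_eq_single_of_mem u₀ hu₀
      intro z hz hzne
      apply ov_of_not_adj
      intro hadj
      exact hzne (huniq z hz hadj)
    refine ⟨hcard', ?_, ?_⟩
    · -- connectivity is preserved
      intro v hv u hu
      rw [hs'] at hv hu
      have hchain := hconn' v (Finset.mem_of_mem_erase hv) u (Finset.mem_of_mem_erase hu)
      have := (shortcut G st.1 ℓ u₀ hneu huniq hv hchain).1 (Finset.mem_erase.mp hu).1
      rw [hs']
      exact this
    · -- weights are preserved
      intro v hv
      rw [hs'] at hv
      obtain ⟨hvℓ, hvs⟩ := Finset.mem_erase.mp hv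
      rw [hs', hw']
      by_cases hvu : v = u₀
      · subst hvu
        rw [Function.update_self, hwt v hvs, hoveq,
          Finset.sum_erase_eq_sub hℓ, ov_comm x y σ τ ℓ v]
      · rw [Function.update_of_ne hvu, hwt v hvs, Finset.sum_erase_eq_sub hℓ]
        have : ov x y σ τ v ℓ = 0 := by
          apply ov_of_not_adj
          intro hadj
          exact hvu (huniq v hvs hadj.symm)
        rw [this, sub_zero]
  have hreachinv : ∀ n st st', ReachN G n st st' → ∀ k, Inv k st → Inv (k + n) st' := by
    intro n
    induction n with
    | zero =>
      intro st st' hr k hk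
      rw [show st' = st from hr]
      exact hk
    | succ n IH =>
      intro st st' hr k hk
      obtain ⟨m, hm1, hm2⟩ := hr
      have := IH m st' hm2 (k + 1) (hstep k st m hk hm1)
      rw [show k + 1 + n = k + (n + 1) by omega] at this
      exact this
  have hinit : Inv 0 (Finset.univ, Sum.elim x y) := by
    refine ⟨by simp [Fintype.card_sum], ?_, ?_⟩
    · intro v _ u _
      have := hconn.preconnected v u
      rw [SimpleGraph.reachable_iff_reflTransGen] at this
      exact Relation.ReflTransGen.mono (show G.Adj ≤ R Finset.univ from fun p q h => ⟨Finset.mem_univ _, Finset.mem_univ _, h⟩) v u this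
    · intro v _
      exact init_weight x y σ τ hx hy hsum v
  refine ⟨htree, ?_, ?_, hx, hy, hsum, ?_⟩
  · intro i j
    rintro ⟨h1, -⟩
    exact h1 rfl
  · intro i j
    rintro ⟨h1, -⟩
    exact h1 rfl
  · intro n hn1 hn2 st hst v hv
    have hinv : Inv n st := by
      have := hreachinv n _ _ hst 0 hinit
      rwa [zero_add] at this
    obtain ⟨hcard, hconn', hwt⟩ := hinv
    have hcard2 : 1 < st.1.card := by omega
    obtain ⟨u, hu, hu_ne⟩ := Finset.exists_mem_ne hcard2 v
    have hchain := hconn' v hv u hu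
    rcases Relation.ReflTransGen.cases_head hchain with h | ⟨w, ⟨-, hws, hadj⟩, -⟩
    · exact absurd h.symm hu_ne
    · rw [hwt v hv]
      apply Finset.sum_pos' (fun z _ => ov_nonneg x y σ τ hx hy v z)
      exact ⟨w, hws, ov_pos x y σ τ hx hy hadj⟩

end Construction2


end CGAux

namespace CGAux

/-- If two of the `x i` are incommensurable, there are orderings of the two sides with no
coincidence among the proper partial sums. -/
lemma exists_sort {a b : ℕ} (x : Fin a → ℝ) (y : Fin b → ℝ)
    (hx : ∀ i, 0 < x i) (hy : ∀ j, 0 < y j) (hsum : ∑ i, x i = ∑ j, y j)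
    (hpair : ∃ i j : Fin a, ¬∃ q : ℚ, x i = (q : ℝ) * x j) :
    ∃ (σ : Equiv.Perm (Fin a)) (τ : Equiv.Perm (Fin b)),
      ∀ k l, k < a → l < b → Xc x σ k = Xc y τ l → k = 0 ∧ l = 0 := by
  classical
  obtain ⟨i₀, j₀, hij⟩ := hpair
  obtain ⟨φ, hφ1, hφ0⟩ := exists_phi (x i₀) (x j₀) (ne_of_gt (hx j₀)) hij
  set keyx : Fin a → ℝ := fun i => -(((φ (x i) : ℚ) : ℝ) / x i) with hkeyx
  set keyy : Fin b → ℝ := fun j => ((φ (y j) : ℚ) : ℝ) / y j with hkeyy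
  set σ := Tuple.sort keyx with hσ
  set τ := Tuple.sort keyy with hτ
  refine ⟨σ, τ, ?_⟩
  set px : ℕ → ℝ := fun m => if h : m < a then ((φ (x (σ ⟨m, h⟩)) : ℚ) : ℝ) else 0 with hpx
  set py : ℕ → ℝ := fun m => if h : m < b then -((φ (y (τ ⟨m, h⟩)) : ℚ) : ℝ) else 0 with hpy
  have hwx_pos : ∀ m, m < a → 0 < xe x σ m := fun m hm => xe_pos x σ hx hm
  have hwx0 : ∀ m, a ≤ m → xe x σ m = 0 := fun m hm => xe_zero x σ hx hm
  have hwy_pos : ∀ m, m < b → 0 < xe y τ m := fun m hm => xe_pos y τ hy hm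
  have hwy0 : ∀ m, b ≤ m → xe y τ m = 0 := fun m hm => xe_zero y τ hy hm
  -- cross-monotonicity on the x side (decreasing slopes)
  have hcrossx : ∀ i j, i ≤ j → j < a → px j * xe x σ i ≤ px i * xe x σ j := by
    intro i j hij hja
    have hia : i < a := lt_of_le_of_lt hij hja
    have hmono := Tuple.monotone_sort keyx
      (show (⟨i, hia⟩ : Fin a) ≤ ⟨j, hja⟩ from hij)
    simp only [Function.comp_apply, hkeyx] at hmono
    have hwi : 0 < x (σ ⟨i, hia⟩) := hx _
    have hwj : 0 < x (σ ⟨j, hja⟩) := hx _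
    rw [neg_le_neg_iff, div_le_div_iff₀ hwj hwi] at hmono
    have epj : px j = ((φ (x (σ ⟨j, hja⟩)) : ℚ) : ℝ) := dif_pos hja
    have epi : px i = ((φ (x (σ ⟨i, hia⟩)) : ℚ) : ℝ) := dif_pos hia
    have exj : xe x σ j = x (σ ⟨j, hja⟩) := dif_pos hja
    have exi : xe x σ i = x (σ ⟨i, hia⟩) := dif_pos hia
    rw [epj, epi, exj, exi]
    exact hmono
  -- cross-monotonicity on the y side (negated increasing slopes)
  have hcrossy : ∀ i j, i ≤ j → j < b → py j * xe y τ i ≤ py i * xe y τ j := by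
    intro i j hij hjb
    have hib : i < b := lt_of_le_of_lt hij hjb
    have hmono := Tuple.monotone_sort keyy
      (show (⟨i, hib⟩ : Fin b) ≤ ⟨j, hjb⟩ from hij)
    simp only [Function.comp_apply, hkeyy] at hmono
    have hwi : 0 < y (τ ⟨i, hib⟩) := hy _
    have hwj : 0 < y (τ ⟨j, hjb⟩) := hy _
    rw [div_le_div_iff₀ hwi hwj] at hmono
    have epj : py j = -((φ (y (τ ⟨j, hjb⟩)) : ℚ) : ℝ) := dif_pos hjb
    have epi : py i = -((φ (y (τ ⟨i, hib⟩)) : ℚ) : ℝ) := dif_pos hib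
    have exj : xe y τ j = y (τ ⟨j, hjb⟩) := dif_pos hjb
    have exi : xe y τ i = y (τ ⟨i, hib⟩) := dif_pos hib
    rw [epj, epi, exj, exi]
    linarith
  -- the x side has two distinct slopes
  have hnex : ∃ i j, i < a ∧ j < a ∧ px i * xe x σ j ≠ px j * xe x σ i := by
    refine ⟨σ.symm i₀, σ.symm j₀, (σ.symm i₀).isLt, (σ.symm j₀).isLt, ?_⟩
    have ep1 : px (σ.symm i₀) = ((φ (x (σ ⟨(σ.symm i₀ : ℕ), (σ.symm i₀).isLt⟩)) : ℚ) : ℝ) :=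
      dif_pos (σ.symm i₀).isLt
    have ep2 : px (σ.symm j₀) = ((φ (x (σ ⟨(σ.symm j₀ : ℕ), (σ.symm j₀).isLt⟩)) : ℚ) : ℝ) :=
      dif_pos (σ.symm j₀).isLt
    have ex1 : xe x σ (σ.symm i₀) = x (σ ⟨(σ.symm i₀ : ℕ), (σ.symm i₀).isLt⟩) :=
      dif_pos (σ.symm i₀).isLt
    have ex2 : xe x σ (σ.symm j₀) = x (σ ⟨(σ.symm j₀ : ℕ), (σ.symm j₀).isLt⟩) :=
      dif_pos (σ.symm j₀).isLt
    rw [ep1, ep2, ex1, ex2]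
    have e1 : σ ⟨(σ.symm i₀ : ℕ), (σ.symm i₀).isLt⟩ = i₀ := by
      rw [show (⟨(σ.symm i₀ : ℕ), (σ.symm i₀).isLt⟩ : Fin a) = σ.symm i₀ from rfl,
        Equiv.apply_symm_apply]
    have e2 : σ ⟨(σ.symm j₀ : ℕ), (σ.symm j₀).isLt⟩ = j₀ := by
      rw [show (⟨(σ.symm j₀ : ℕ), (σ.symm j₀).isLt⟩ : Fin a) = σ.symm j₀ from rfl,
        Equiv.apply_symm_apply]
    rw [e1, e2, hφ1, hφ0]

    push_cast
    simp only [one_mul, zero_mul]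
    exact ne_of_gt (hx j₀)
  -- `φ` of a partial sum is the partial sum of `p`
  have hphiX : ∀ k, k ≤ a → ((φ (Xc x σ k) : ℚ) : ℝ) = ps px k := by
    intro k hk
    unfold Xc ps
    rw [map_sum φ (fun i => xe x σ i) (Finset.range k)]
    push_cast
    apply Finset.sum_congr rfl
    intro i hi
    have hia : i < a := lt_of_lt_of_le (Finset.mem_range.mp hi) hk
    have e1 : px i = ((φ (x (σ ⟨i, hia⟩)) : ℚ) : ℝ) := dif_pos hia
    have e2 : xe x σ i = x (σ ⟨i, hia⟩) := dif_pos hia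
    rw [e1, e2]
  have hphiY : ∀ l, l ≤ b → -((φ (Xc y τ l) : ℚ) : ℝ) = ps py l := by
    intro l hl
    unfold Xc ps
    rw [map_sum φ (fun i => xe y τ i) (Finset.range l)]
    push_cast
    rw [neg_eq_iff_eq_neg, ← Finset.sum_neg_distrib]
    apply Finset.sum_congr rfl
    intro i hi
    have hib : i < b := lt_of_lt_of_le (Finset.mem_range.mp hi) hl
    have e1 : py i = -((φ (y (τ ⟨i, hib⟩)) : ℚ) : ℝ) := dif_pos hib
    have e2 : xe y τ i = y (τ ⟨i, hib⟩) := dif_pos hib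
    rw [e1, e2]
    ring
  -- now the main argument
  intro k l hka hlb heq
  by_cases hk0 : k = 0
  · subst hk0
    constructor
    · rfl
    · by_contra hl0
      have : 0 < Xc y τ l := by
        have := Xc_strict y τ hy (show 0 < l by omega) (show 0 < b by omega)
        rwa [Xc_zero y τ hy] at this
      rw [Xc_zero x σ hx] at heq
      linarith [heq ▸ this]
  · exfalso
    have hl0 : l ≠ 0 := by
      intro hl0
      subst hl0
      have : 0 < Xc x σ k := by
        have := Xc_strict x σ hx (show 0 < k by omega) (show 0 < a by omega)
        rwa [Xc_zero x σ hx] at this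
      rw [Xc_zero y τ hy] at heq
      linarith
    -- strict inequality on the x side
    have hstrict := prefix_gt (xe x σ) px a hwx_pos hwx0
      (fun m hm => show px m = 0 from dif_neg (by omega)) hcrossx hnex k
      (by omega) hka
    -- non-strict inequality on the y side
    have hge := prefix_ge (xe y τ) py b hwy_pos hwy0
      (fun m hm => show py m = 0 from dif_neg (by omega)) hcrossy l (le_of_lt hlb)
    -- identify everything
    have hXk : ps (xe x σ) k = Xc x σ k := rfl
    have hYl : ps (xe y τ) l = Xc y τ l := rfl
    have hXa : ps (xe x σ) a = Xc x σ a := rfl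
    have hYb : ps (xe y τ) b = Xc y τ b := rfl
    have hS : Xc y τ b = Xc x σ a := by
      rw [Xc_top x σ hx, Yc_top x y τ hy hsum]
    have hpk : ps px k = ((φ (Xc x σ k) : ℚ) : ℝ) := (hphiX k hka.le).symm
    have hpl : ps py l = -((φ (Xc y τ l) : ℚ) : ℝ) := (hphiY l hlb.le).symm
    have hpa : ps px a = ((φ (Xc x σ a) : ℚ) : ℝ) := (hphiX a le_rfl).symm
    have hpb : ps py b = -((φ (Xc y τ b) : ℚ) : ℝ) := (hphiY b le_rfl).symm
    rw [hXk, hXa, hpk, hpa] at hstrict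
    rw [hYl, hYb, hpl, hpb] at hge
    rw [heq] at hstrict
    rw [hS] at hge
    linarith [hstrict, hge]

end CGAux

namespace CGAux

lemma all_comm {a b : ℕ} (ha : 0 < a) (hb : 0 < b) (x : Fin a → ℝ) (y : Fin b → ℝ)
    (hx : ∀ i, 0 < x i) (hy : ∀ j, 0 < y j) (hsum : ∑ i, x i = ∑ j, y j)
    (hallx : ∀ i j : Fin a, ∃ q : ℚ, x i = (q : ℝ) * x j)
    (hally : ∀ i j : Fin b, ∃ q : ℚ, y i = (q : ℝ) * y j) :
    ∀ u v : Fin a ⊕ Fin b, ∃ q : ℚ, Sum.elim x y u = (q : ℝ) * Sum.elim x y v := by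
  set i0 : Fin a := ⟨0, ha⟩
  set j0 : Fin b := ⟨0, hb⟩
  set S : ℝ := ∑ i, x i with hS
  have hSpos : 0 < S := Finset.sum_pos (fun i _ => hx i) ⟨i0, Finset.mem_univ _⟩
  choose qx hqx using fun i => hallx i i0
  choose qy hqy using fun j => hally j j0
  have hQ : S = ((∑ i, qx i : ℚ) : ℝ) * x i0 := by
    rw [hS]
    push_cast
    rw [Finset.sum_mul]
    exact Finset.sum_congr rfl fun i _ => hqx i
  have hR : S = ((∑ j, qy j : ℚ) : ℝ) * y j0 := by
    rw [hsum]
    push_cast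
    rw [Finset.sum_mul]
    exact Finset.sum_congr rfl fun j _ => hqy j
  set Q : ℚ := ∑ i, qx i with hQdef
  set R : ℚ := ∑ j, qy j with hRdef
  have hQne : (Q : ℝ) ≠ 0 := by
    intro h
    rw [h, zero_mul] at hQ
    linarith
  have hRne : (R : ℝ) ≠ 0 := by
    intro h
    rw [h, zero_mul] at hR
    linarith
  have key : ∀ u : Fin a ⊕ Fin b, ∃ α : ℚ, Sum.elim x y u = (α : ℝ) * S := by
    intro u
    cases u with
    | inl i =>
      refine ⟨qx i / Q, ?_⟩
      have : x i0 = S / (Q : ℝ) := by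
        field_simp [hQ]
        rw [hQ]; ring
      show x i = _
      rw [hqx i, this]
      push_cast
      field_simp
    | inr j =>
      refine ⟨qy j / R, ?_⟩
      have : y j0 = S / (R : ℝ) := by
        field_simp [hR]
        rw [hR]; ring
      show y j = _
      rw [hqy j, this]
      push_cast
      field_simp
  intro u v
  obtain ⟨α, hα⟩ := key u
  obtain ⟨β, hβ⟩ := key v
  have hvpos : 0 < Sum.elim x y v := by
    cases v with
    | inl i => exact hx i
    | inr j => exact hy j
  have hβne : (β : ℝ) ≠ 0 := by
    intro h
    rw [h, zero_mul] at hβ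
    linarith
  refine ⟨α / β, ?_⟩
  rw [hα, hβ]
  push_cast
  field_simp

end CGAux

/-- If `x₁,…,x_a` and `y₁,…,y_b` are strictly positive reals with equal sums and there is
no connection graph with the `x_i` on one side and the `y_j` on the other, then all these
numbers are pairwise commensurable: each ratio of two of them is rational. -/
theorem commensurable_of_no_connection_graph (a b : ℕ) (x : Fin a → ℝ) (y : Fin b → ℝ)
    (hx : ∀ i, 0 < x i) (hy : ∀ j, 0 < y j)
    (hsum : ∑ i, x i = ∑ j, y j)
    (hno : ¬ ∃ G : SimpleGraph (Fin a ⊕ Fin b), IsConnectionGraph G x y) :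
    ∀ u v : Fin a ⊕ Fin b, ∃ q : ℚ, Sum.elim x y u = (q : ℝ) * Sum.elim x y v := by
  classical
  rcases Nat.eq_zero_or_pos a with ha0 | ha
  · subst ha0
    rcases Nat.eq_zero_or_pos b with hb0 | hb
    · subst hb0
      intro u
      cases u with
      | inl i => exact i.elim0
      | inr j => exact j.elim0
    · exfalso
      have h1 : (0:ℝ) = ∑ j, y j := by simpa using hsum
      have h2 : 0 < ∑ j, y j := Finset.sum_pos (fun j _ => hy j) ⟨⟨0, hb⟩, Finset.mem_univ _⟩
      linarith
  rcases Nat.eq_zero_or_pos b with hb0 | hb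
  · subst hb0
    exfalso
    have h1 : ∑ i, x i = (0:ℝ) := by simpa using hsum
    have h2 : 0 < ∑ i, x i := Finset.sum_pos (fun i _ => hx i) ⟨⟨0, ha⟩, Finset.mem_univ _⟩
    linarith
  by_cases hallx : ∀ i j : Fin a, ∃ q : ℚ, x i = (q : ℝ) * x j
  · by_cases hally : ∀ i j : Fin b, ∃ q : ℚ, y i = (q : ℝ) * y j
    · exact CGAux.all_comm ha hb x y hx hy hsum hallx hally
    · exfalso
      apply hno
      push_neg at hally
      obtain ⟨i, j, hij⟩ := hally
      obtain ⟨τ, σ, hco'⟩ := CGAux.exists_sort y x hy hx hsum.symm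
        ⟨i, j, fun ⟨q, hq⟩ => hij q hq⟩
      refine ⟨CGAux.CG x y σ τ, CGAux.isConnectionGraph_CG x y σ τ hx hy ha hb hsum ?_⟩
      intro k l hk hl heq
      obtain ⟨h1, h2⟩ := hco' l k hl hk heq.symm
      exact ⟨h2, h1⟩
  · exfalso
    apply hno
    push_neg at hallx
    obtain ⟨i, j, hij⟩ := hallx
    obtain ⟨σ, τ, hco⟩ := CGAux.exists_sort x y hx hy hsum ⟨i, j, fun ⟨q, hq⟩ => hij q hq⟩
    exact ⟨CGAux.CG x y σ τ, CGAux.isConnectionGraph_CG x y σ τ hx hy ha hb hsum hco⟩
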